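/- arXiv:1512.07580 — 2 statements merged into one kernel-verified Lean document; each statement's English description precedes it below -/
import Mathlib

section
/- Let L : D ⇄ C : R be an adjunction with counit ε, and (E,F) a factorisation system on D such that RL sends F to F and R(ε_X) ∈ F for all X; let D̃ ⊆ C be the full subcategory spanned by objects isomorphic to L(A), Ẽ the class of morphisms of D̃ isomorphic in the arrow category to some L(e) with e ∈ E, and R^{-1}F the class of all morphisms f of C with R(f) ∈ F. Then: (a) every morphism of C whose domain lies in D̃ factors as a morphism of Ẽ followed by a morphism of R^{-1}F, and Ẽ is orthogonal to R^{-1}F; (b) the inclusion of Ar^Ẽ(D̃) (the full subcategory of the arrow category of C spanned by morphisms in Ẽ) into D̃↓C (the full subcategory of the arrow category of C spanned by morphisms with domain in D̃) admits a right adjoint, sending a morphism to its Ẽ-factor; and (c) this right adjoint sends morphisms that are cartesian for the domain projection D̃↓C → D̃ (commutative squares with invertible bottom edge) to morphisms that are cartesian for the domain projection Ar^Ẽ(D̃) → D̃. -/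
open CategoryTheory

namespace DS3

universe v u v' u' v₂ u₂

variable {D : Type u} [Category.{v} D]

structure FactorisationSystem (D : Type u) [Category.{v} D] where
  E : MorphismProperty D
  F : MorphismProperty D
  E_comp_iso : ∀ {X Y Z : D} (e : X ⟶ Y) (i : Y ⟶ Z), IsIso i → E e → E (e ≫ i)
  E_iso_comp : ∀ {X Y Z : D} (i : X ⟶ Y) (e : Y ⟶ Z), IsIso i → E e → E (i ≫ e)
  F_comp_iso : ∀ {X Y Z : D} (f : X ⟶ Y) (i : Y ⟶ Z), IsIso i → F f → F (f ≫ i)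
  F_iso_comp : ∀ {X Y Z : D} (i : X ⟶ Y) (f : Y ⟶ Z), IsIso i → F f → F (i ≫ f)
  orth : ∀ {A B X Y : D} (e : A ⟶ B) (f : X ⟶ Y), E e → F f →
    ∀ (u : A ⟶ X) (v : B ⟶ Y), u ≫ f = e ≫ v →
      ∃! d : B ⟶ X, e ≫ d = u ∧ d ≫ f = v
  fact : ∀ {X Y : D} (h : X ⟶ Y), ∃ (Z : D) (e : X ⟶ Z) (f : Z ⟶ Y), E e ∧ F f ∧ e ≫ f = h

/-- A morphism `ψ : c' ⟶ c` is *cartesian* with respect to a functor `p`. -/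
def IsCartesianArrow {C : Type u'} [Category.{v'} C] {D' : Type u₂} [Category.{v₂} D']
    (p : C ⥤ D') {c' c : C} (ψ : c' ⟶ c) : Prop :=
  ∀ (c'' : C) (χ : c'' ⟶ c) (g : p.obj c'' ⟶ p.obj c'),
    g ≫ p.map ψ = p.map χ →
    ∃! θ : c'' ⟶ c', θ ≫ ψ = χ ∧ p.map θ = g

variable {C : Type u₂} [Category.{v₂} C]

/-- Membership of the full subcategory `D̃ ⊆ C`. -/
def inTildeD (L : D ⥤ C) (X : C) : Prop := ∃ A : D, Nonempty (L.obj A ≅ X)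

/-- The class `Ẽ`: morphisms of `C` isomorphic in the arrow category to some `L e`, `e ∈ E`. -/
def isTildeE (L : D ⥤ C) (fs : FactorisationSystem D) {X Y : C} (g : X ⟶ Y) : Prop :=
  ∃ (A B : D) (e : A ⟶ B), fs.E e ∧ Nonempty (Arrow.mk (L.map e) ≅ Arrow.mk g)

/-- The category `D̃ ⊆ C` as a full subcategory. -/
abbrev TildeD (L : D ⥤ C) := ObjectProperty.FullSubcategory (inTildeD L)

/-- `Ar^Ẽ(D̃)`: the full subcategory of `Ar(C)` spanned by the `Ẽ`-morphisms of `D̃`. -/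
abbrev ArEt (L : D ⥤ C) (fs : FactorisationSystem D) :=
  ObjectProperty.FullSubcategory (fun φ : Arrow C =>
    inTildeD L φ.left ∧ inTildeD L φ.right ∧ isTildeE L fs φ.hom)

/-- `D̃↓C`: the full subcategory of `Ar(C)` spanned by morphisms whose domain lies in `D̃`. -/
abbrev DdownC (L : D ⥤ C) := ObjectProperty.FullSubcategory (fun φ : Arrow C => inTildeD L φ.left)

/-- The inclusion `Ar^Ẽ(D̃) ↪ D̃↓C`. -/
def inclArE (L : D ⥤ C) (fs : FactorisationSystem D) : ArEt L fs ⥤ DdownC L :=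
  ObjectProperty.ιOfLE (fun _ h => h.1)

/-- The domain projection `Ar^Ẽ(D̃) ⥤ D̃`. -/
def domProjArE (L : D ⥤ C) (fs : FactorisationSystem D) : ArEt L fs ⥤ TildeD L where
  obj φ := ⟨φ.obj.left, φ.property.1⟩
  map ψ := ObjectProperty.homMk (CommaMorphism.left ψ.hom)

section Aux

/-- In a factorisation system, `F` is closed under composition. -/
lemma F_comp (fs : FactorisationSystem D) {X Y Z : D} {f : X ⟶ Y} {g : Y ⟶ Z}
    (hf : fs.F f) (hg : fs.F g) : fs.F (f ≫ g) := by
  obtain ⟨W, e, f', he, hf', hef⟩ := fs.fact (f ≫ g)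
  obtain ⟨d₁, ⟨hd₁₁, hd₁₂⟩, -⟩ := fs.orth e g he hg f f' hef.symm
  obtain ⟨d₂, ⟨hd₂₁, hd₂₂⟩, -⟩ := fs.orth e f he hf (𝟙 X) d₁ (by simp [hd₁₁])
  have hretr : d₂ ≫ e = 𝟙 W := by
    obtain ⟨x, -, hx⟩ := fs.orth e f' he hf' e f' rfl
    have h1 := hx (d₂ ≫ e) ⟨by rw [← Category.assoc, hd₂₁, Category.id_comp],
      by rw [Category.assoc, hef, ← Category.assoc, hd₂₂, hd₁₂]⟩
    have h2 := hx (𝟙 W) ⟨Category.comp_id e, Category.id_comp f'⟩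
    rw [h1, h2]
  have : IsIso e := ⟨d₂, hd₂₁, hretr⟩
  rw [← hef]
  exact fs.F_iso_comp e f' this hf'

/-- Orthogonality of `L e₀` (with `e₀ ∈ E`) against `R⁻¹ F`. -/
lemma orthL (L : D ⥤ C) (R : C ⥤ D) (adj : L ⊣ R) (fs : FactorisationSystem D)
    {A₀ B₀ : D} {e₀ : A₀ ⟶ B₀} (he : fs.E e₀) {X Y : C} {f : X ⟶ Y} (hf : fs.F (R.map f))
    (u : L.obj A₀ ⟶ X) (v : L.obj B₀ ⟶ Y) (hsq : u ≫ f = L.map e₀ ≫ v) :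
    ∃! d : L.obj B₀ ⟶ X, L.map e₀ ≫ d = u ∧ d ≫ f = v := by
  have hsq' : (adj.homEquiv A₀ X u) ≫ R.map f = e₀ ≫ adj.homEquiv B₀ Y v := by
    rw [← Adjunction.homEquiv_naturality_right, hsq, Adjunction.homEquiv_naturality_left]
  obtain ⟨d₀, ⟨h1, h2⟩, uniq⟩ := fs.orth e₀ (R.map f) he hf _ _ hsq'
  refine ⟨(adj.homEquiv B₀ X).symm d₀, ⟨?_, ?_⟩, ?_⟩
  · rw [← Adjunction.homEquiv_naturality_left_symm, h1, Equiv.symm_apply_apply]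
  · rw [← Adjunction.homEquiv_naturality_right_symm, h2, Equiv.symm_apply_apply]
  · rintro y ⟨hy1, hy2⟩
    have : adj.homEquiv B₀ X y = d₀ := by
      apply uniq
      constructor
      · rw [← Adjunction.homEquiv_naturality_left, hy1]
      · rw [← Adjunction.homEquiv_naturality_right, hy2]
    rw [← this, Equiv.symm_apply_apply]

/-- Orthogonality of `Ẽ` against `R⁻¹ F`. -/
lemma orthE (L : D ⥤ C) (R : C ⥤ D) (adj : L ⊣ R) (fs : FactorisationSystem D)
    {A B X Y : C} {e : A ⟶ B} {f : X ⟶ Y} (he : isTildeE L fs e) (hf : fs.F (R.map f))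
    (u : A ⟶ X) (v : B ⟶ Y) (hsq : u ≫ f = e ≫ v) :
    ∃! d : B ⟶ X, e ≫ d = u ∧ d ≫ f = v := by
  obtain ⟨A₀, B₀, e₀, he₀, ⟨ι⟩⟩ := he
  have hw : ι.hom.left ≫ e = L.map e₀ ≫ ι.hom.right := Arrow.w ι.hom
  have hw' : ι.inv.left ≫ L.map e₀ = e ≫ ι.inv.right := Arrow.w ι.inv
  have hli : ι.inv.left ≫ ι.hom.left = 𝟙 A := by
    have h := congrArg CommaMorphism.left ι.inv_hom_id
    exact h
  have hri : ι.inv.right ≫ ι.hom.right = 𝟙 B := by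
    have h := congrArg CommaMorphism.right ι.inv_hom_id
    exact h
  have hir : ι.hom.right ≫ ι.inv.right = 𝟙 (L.obj B₀) := by
    have h := congrArg CommaMorphism.right ι.hom_inv_id
    exact h
  obtain ⟨d₀, ⟨h1, h2⟩, uniq⟩ := orthL L R adj fs he₀ hf (ι.hom.left ≫ u) (ι.hom.right ≫ v)
    (by rw [Category.assoc, hsq, ← Category.assoc, hw, Category.assoc])
  refine ⟨ι.inv.right ≫ d₀, ⟨?_, ?_⟩, ?_⟩
  · rw [← Category.assoc, ← hw', Category.assoc, h1, ← Category.assoc, hli, Category.id_comp]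
  · rw [Category.assoc, h2, ← Category.assoc, hri, Category.id_comp]
  · rintro y ⟨hy1, hy2⟩
    have : ι.hom.right ≫ y = d₀ := by
      apply uniq
      constructor
      · rw [← Category.assoc, ← hw, Category.assoc, hy1]
      · rw [Category.assoc, hy2]
    rw [← this, ← Category.assoc, hri, Category.id_comp]

/-- If `g ∈ Ẽ` then the codomain of `g` lies in `D̃`. -/
lemma tildeE_cod (L : D ⥤ C) (fs : FactorisationSystem D) {X Y : C} {g : X ⟶ Y}
    (hg : isTildeE L fs g) : inTildeD L Y := by
  obtain ⟨A, B, e, _, ⟨ι⟩⟩ := hg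
  exact ⟨B, ⟨Arrow.rightFunc.mapIso ι⟩⟩

/-- Projections of identities and compositions in full subcategories of `Arrow C`. -/
lemma sub_id_left {P : Arrow C → Prop} (a : ObjectProperty.FullSubcategory P) :
    CommaMorphism.left (𝟙 a : a ⟶ a).hom = 𝟙 a.obj.left := rfl

lemma sub_id_right {P : Arrow C → Prop} (a : ObjectProperty.FullSubcategory P) :
    CommaMorphism.right (𝟙 a : a ⟶ a).hom = 𝟙 a.obj.right := rfl

lemma sub_comp_left {P : Arrow C → Prop} {a b c : ObjectProperty.FullSubcategory P}
    (φ : a ⟶ b) (ψ : b ⟶ c) :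
    CommaMorphism.left (φ ≫ ψ).hom = CommaMorphism.left φ.hom ≫ CommaMorphism.left ψ.hom := rfl

lemma sub_comp_right {P : Arrow C → Prop} {a b c : ObjectProperty.FullSubcategory P}
    (φ : a ⟶ b) (ψ : b ⟶ c) :
    CommaMorphism.right (φ ≫ ψ).hom = CommaMorphism.right φ.hom ≫ CommaMorphism.right ψ.hom := rfl

lemma comp_inv_comp_cancel {X Y Z : C} (f : X ⟶ Z) (i : Y ⟶ Z) (h : IsIso i) :
    (f ≫ inv i) ≫ i = f := by simp

/-- Part (a): factorisation. -/
lemma factor (L : D ⥤ C) (R : C ⥤ D) (adj : L ⊣ R) (fs : FactorisationSystem D)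
    (hRL : ∀ {X Y : D} (f : X ⟶ Y), fs.F f → fs.F (R.map (L.map f)))
    (hcounit : ∀ X : C, fs.F (R.map (adj.counit.app X)))
    {X Y : C} (h : X ⟶ Y) (hX : inTildeD L X) :
    ∃ (Z : C) (e : X ⟶ Z) (f : Z ⟶ Y), isTildeE L fs e ∧ fs.F (R.map f) ∧ e ≫ f = h := by
  obtain ⟨A, ⟨σ⟩⟩ := hX
  obtain ⟨Z₀, e₀, f₀, he, hf, hef⟩ := fs.fact (adj.homEquiv A Y (σ.hom ≫ h))
  refine ⟨L.obj Z₀, σ.inv ≫ L.map e₀, L.map f₀ ≫ adj.counit.app Y, ?_, ?_, ?_⟩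
  · exact ⟨A, Z₀, e₀, he, ⟨Arrow.isoMk σ (Iso.refl _) (by simp)⟩⟩
  · rw [R.map_comp]
    exact F_comp fs (hRL f₀ hf) (hcounit Y)
  · rw [Category.assoc, ← Category.assoc (L.map e₀), ← L.map_comp, hef]
    have h2 : L.map ((adj.homEquiv A Y) (σ.hom ≫ h)) ≫ adj.counit.app Y = σ.hom ≫ h := by
      have h3 := (adj.homEquiv A Y).symm_apply_apply (σ.hom ≫ h)
      rwa [Adjunction.homEquiv_counit] at h3
    rw [h2, Iso.inv_hom_id_assoc]

/-- Data of a chosen factorisation of an object of `D̃↓C`. -/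
structure FactData (L : D ⥤ C) (R : C ⥤ D) (fs : FactorisationSystem D) (a : DdownC L) where
  Z : C
  e : a.obj.left ⟶ Z
  f : Z ⟶ a.obj.right
  he : isTildeE L fs e
  hf : fs.F (R.map f)
  hef : e ≫ f = a.obj.hom

variable (L : D ⥤ C) (R : C ⥤ D) (adj : L ⊣ R) (fs : FactorisationSystem D)
variable (hRL : ∀ {X Y : D} (f : X ⟶ Y), fs.F f → fs.F (R.map (L.map f)))
variable (hcounit : ∀ X : C, fs.F (R.map (adj.counit.app X)))

/-- A choice of factorisation for every object of `D̃↓C`. -/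
noncomputable def fd (a : DdownC L) : FactData L R fs a :=
  Classical.choice <| by
    obtain ⟨Z, e, f, h1, h2, h3⟩ := factor L R adj fs hRL hcounit a.obj.hom a.property
    exact ⟨⟨Z, e, f, h1, h2, h3⟩⟩

lemma wmap_exu {a b : DdownC L} (φ : a ⟶ b) :
    ∃! m : (fd L R adj fs hRL hcounit a).Z ⟶ (fd L R adj fs hRL hcounit b).Z,
      (fd L R adj fs hRL hcounit a).e ≫ m = φ.hom.left ≫ (fd L R adj fs hRL hcounit b).e ∧
      m ≫ (fd L R adj fs hRL hcounit b).f = (fd L R adj fs hRL hcounit a).f ≫ φ.hom.right :=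
  orthE L R adj fs (fd L R adj fs hRL hcounit a).he (fd L R adj fs hRL hcounit b).hf _ _
    (by rw [Category.assoc, (fd L R adj fs hRL hcounit b).hef, ← Category.assoc,
      (fd L R adj fs hRL hcounit a).hef]; exact Arrow.w φ.hom)

/-- The `Ẽ`-part action on morphisms. -/
noncomputable def wmap {a b : DdownC L} (φ : a ⟶ b) :
    (fd L R adj fs hRL hcounit a).Z ⟶ (fd L R adj fs hRL hcounit b).Z :=
  (wmap_exu L R adj fs hRL hcounit φ).exists.choose

lemma wmap_comm₁ {a b : DdownC L} (φ : a ⟶ b) :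
    (fd L R adj fs hRL hcounit a).e ≫ wmap L R adj fs hRL hcounit φ =
      φ.hom.left ≫ (fd L R adj fs hRL hcounit b).e :=
  (wmap_exu L R adj fs hRL hcounit φ).exists.choose_spec.1

lemma wmap_comm₂ {a b : DdownC L} (φ : a ⟶ b) :
    wmap L R adj fs hRL hcounit φ ≫ (fd L R adj fs hRL hcounit b).f =
      (fd L R adj fs hRL hcounit a).f ≫ φ.hom.right :=
  (wmap_exu L R adj fs hRL hcounit φ).exists.choose_spec.2

lemma wmap_eq {a b : DdownC L} (φ : a ⟶ b)
    {m : (fd L R adj fs hRL hcounit a).Z ⟶ (fd L R adj fs hRL hcounit b).Z}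
    (h1 : (fd L R adj fs hRL hcounit a).e ≫ m = φ.hom.left ≫ (fd L R adj fs hRL hcounit b).e)
    (h2 : m ≫ (fd L R adj fs hRL hcounit b).f = (fd L R adj fs hRL hcounit a).f ≫ φ.hom.right) :
    wmap L R adj fs hRL hcounit φ = m :=
  (wmap_exu L R adj fs hRL hcounit φ).unique
    ⟨wmap_comm₁ L R adj fs hRL hcounit φ, wmap_comm₂ L R adj fs hRL hcounit φ⟩ ⟨h1, h2⟩

/-- The right adjoint `w : D̃↓C ⥤ Ar^Ẽ(D̃)`. -/
noncomputable def wfun : DdownC L ⥤ ArEt L fs where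
  obj a :=
    ⟨Arrow.mk (fd L R adj fs hRL hcounit a).e,
      a.property, tildeE_cod L fs (fd L R adj fs hRL hcounit a).he,
      (fd L R adj fs hRL hcounit a).he⟩
  map φ := ObjectProperty.homMk
    { left := φ.hom.left
      right := wmap L R adj fs hRL hcounit φ
      w := by simpa using (wmap_comm₁ L R adj fs hRL hcounit φ).symm }
  map_id a := by
    refine ObjectProperty.hom_ext _ (CommaMorphism.ext ?_ ?_)
    · rfl
    · show wmap L R adj fs hRL hcounit (𝟙 a) = 𝟙 (fd L R adj fs hRL hcounit a).Z
      exact wmap_eq L R adj fs hRL hcounit (𝟙 a)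
        (by exact (Category.comp_id _).trans (Category.id_comp _).symm)
        (by exact (Category.id_comp _).trans (Category.comp_id _).symm)
  map_comp φ ψ := by
    refine ObjectProperty.hom_ext _ (CommaMorphism.ext ?_ ?_)
    · rfl
    · have h1 : (fd L R adj fs hRL hcounit _).e ≫
          (wmap L R adj fs hRL hcounit φ ≫ wmap L R adj fs hRL hcounit ψ) =
          CommaMorphism.left (φ ≫ ψ).hom ≫ (fd L R adj fs hRL hcounit _).e := by
        rw [← Category.assoc, wmap_comm₁ L R adj fs hRL hcounit φ, Category.assoc,
          wmap_comm₁ L R adj fs hRL hcounit ψ, ← Category.assoc, sub_comp_left]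
      have h2 : (wmap L R adj fs hRL hcounit φ ≫ wmap L R adj fs hRL hcounit ψ) ≫
          (fd L R adj fs hRL hcounit _).f =
          (fd L R adj fs hRL hcounit _).f ≫ CommaMorphism.right (φ ≫ ψ).hom := by
        rw [Category.assoc, wmap_comm₂ L R adj fs hRL hcounit ψ, ← Category.assoc,
          wmap_comm₂ L R adj fs hRL hcounit φ, Category.assoc, sub_comp_right]
      exact wmap_eq L R adj fs hRL hcounit (φ ≫ ψ) h1 h2

lemma rlift_exu (x : ArEt L fs) (a : DdownC L) (ψ : (inclArE L fs).obj x ⟶ a) :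
    ∃! r : x.obj.right ⟶ (fd L R adj fs hRL hcounit a).Z,
      x.obj.hom ≫ r = ψ.hom.left ≫ (fd L R adj fs hRL hcounit a).e ∧
      r ≫ (fd L R adj fs hRL hcounit a).f = ψ.hom.right :=
  orthE L R adj fs x.property.2.2 (fd L R adj fs hRL hcounit a).hf _ _
    (by erw [Category.assoc, (fd L R adj fs hRL hcounit a).hef]; exact Arrow.w ψ.hom)

noncomputable def rlift (x : ArEt L fs) (a : DdownC L) (ψ : (inclArE L fs).obj x ⟶ a) :
    x.obj.right ⟶ (fd L R adj fs hRL hcounit a).Z :=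
  (rlift_exu L R adj fs hRL hcounit x a ψ).exists.choose

lemma rlift_comm₁ (x : ArEt L fs) (a : DdownC L) (ψ : (inclArE L fs).obj x ⟶ a) :
    x.obj.hom ≫ rlift L R adj fs hRL hcounit x a ψ =
      ψ.hom.left ≫ (fd L R adj fs hRL hcounit a).e :=
  (rlift_exu L R adj fs hRL hcounit x a ψ).exists.choose_spec.1

lemma rlift_comm₂ (x : ArEt L fs) (a : DdownC L) (ψ : (inclArE L fs).obj x ⟶ a) :
    rlift L R adj fs hRL hcounit x a ψ ≫ (fd L R adj fs hRL hcounit a).f = ψ.hom.right :=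
  (rlift_exu L R adj fs hRL hcounit x a ψ).exists.choose_spec.2

lemma rlift_eq (x : ArEt L fs) (a : DdownC L) (ψ : (inclArE L fs).obj x ⟶ a)
    {r : x.obj.right ⟶ (fd L R adj fs hRL hcounit a).Z}
    (h1 : x.obj.hom ≫ r = ψ.hom.left ≫ (fd L R adj fs hRL hcounit a).e)
    (h2 : r ≫ (fd L R adj fs hRL hcounit a).f = ψ.hom.right) :
    rlift L R adj fs hRL hcounit x a ψ = r :=
  (rlift_exu L R adj fs hRL hcounit x a ψ).unique
    ⟨rlift_comm₁ L R adj fs hRL hcounit x a ψ, rlift_comm₂ L R adj fs hRL hcounit x a ψ⟩ ⟨h1, h2⟩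

/-- The hom-set equivalence of the adjunction `incl ⊣ w`. -/
noncomputable def coreEquiv :
    Adjunction.CoreHomEquiv (inclArE L fs) (wfun L R adj fs hRL hcounit) where
  homEquiv x a :=
    { toFun := fun ψ => ObjectProperty.homMk
        { left := ψ.hom.left
          right := rlift L R adj fs hRL hcounit x a ψ
          w := by exact (rlift_comm₁ L R adj fs hRL hcounit x a ψ).symm }
      invFun := fun χ => ObjectProperty.homMk
        { left := χ.hom.left
          right := χ.hom.right ≫ (fd L R adj fs hRL hcounit a).f
          w := by
            have h : χ.hom.left ≫ (fd L R adj fs hRL hcounit a).e = x.obj.hom ≫ χ.hom.right := by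
              have h0 := Arrow.w χ.hom
              exact h0
            simp only [Functor.id_map]
            show χ.hom.left ≫ a.obj.hom =
              x.obj.hom ≫ χ.hom.right ≫ (fd L R adj fs hRL hcounit a).f
            erw [← Category.assoc, ← h, Category.assoc,
              (fd L R adj fs hRL hcounit a).hef] }
      left_inv := fun ψ => by
        refine ObjectProperty.hom_ext _ (CommaMorphism.ext ?_ ?_)
        · rfl
        · exact rlift_comm₂ L R adj fs hRL hcounit x a ψ
      right_inv := fun χ => by
        refine ObjectProperty.hom_ext _ (CommaMorphism.ext ?_ ?_)
        · rfl
        · refine rlift_eq L R adj fs hRL hcounit x a _ ?_ rfl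
          show x.obj.hom ≫ χ.hom.right = χ.hom.left ≫ (fd L R adj fs hRL hcounit a).e
          have h0 := Arrow.w χ.hom
          exact h0.symm }
  homEquiv_naturality_left_symm := fun {x' x a} f g => by
    refine ObjectProperty.hom_ext _ (CommaMorphism.ext ?_ ?_)
    · rfl
    · show (CommaMorphism.right f.hom ≫ CommaMorphism.right g.hom) ≫
        (fd L R adj fs hRL hcounit a).f =
        CommaMorphism.right f.hom ≫ CommaMorphism.right g.hom ≫ (fd L R adj fs hRL hcounit a).f
      erw [Category.assoc]
  homEquiv_naturality_right := fun {x a b} f g => by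
    refine ObjectProperty.hom_ext _ (CommaMorphism.ext ?_ ?_)
    · rfl
    · have h1 : x.obj.hom ≫
          (rlift L R adj fs hRL hcounit x a f ≫ wmap L R adj fs hRL hcounit g) =
          CommaMorphism.left (f ≫ g).hom ≫ (fd L R adj fs hRL hcounit b).e := by
        erw [← Category.assoc, rlift_comm₁ L R adj fs hRL hcounit x a f, Category.assoc,
          wmap_comm₁ L R adj fs hRL hcounit g, ← Category.assoc, sub_comp_left]
        rfl
      have h2 : (rlift L R adj fs hRL hcounit x a f ≫ wmap L R adj fs hRL hcounit g) ≫
          (fd L R adj fs hRL hcounit b).f = CommaMorphism.right (f ≫ g).hom := by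
        erw [Category.assoc, wmap_comm₂ L R adj fs hRL hcounit g, ← Category.assoc,
          rlift_comm₂ L R adj fs hRL hcounit x a f, sub_comp_right]
        rfl
      exact rlift_eq L R adj fs hRL hcounit x b (f ≫ g) h1 h2

/-- The adjunction `incl ⊣ w`. -/
noncomputable def adjIW : inclArE L fs ⊣ wfun L R adj fs hRL hcounit :=
  Adjunction.mkOfHomEquiv (coreEquiv L R adj fs hRL hcounit)

lemma counit_app_eq (a : DdownC L) :
    (adjIW L R adj fs hRL hcounit).counit.app a =
      ((coreEquiv L R adj fs hRL hcounit).homEquiv _ a).symm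
        (𝟙 ((wfun L R adj fs hRL hcounit).obj a)) := by
  simp [adjIW, Adjunction.mkOfHomEquiv]

lemma counit_left (a : DdownC L) :
    CommaMorphism.left ((adjIW L R adj fs hRL hcounit).counit.app a).hom = 𝟙 a.obj.left := by
  rw [counit_app_eq]
  rfl

lemma counit_right (a : DdownC L) :
    CommaMorphism.right ((adjIW L R adj fs hRL hcounit).counit.app a).hom =
      𝟙 (fd L R adj fs hRL hcounit a).Z ≫ (fd L R adj fs hRL hcounit a).f := by
  rw [counit_app_eq]
  rfl

end Aux

theorem kleisli_coreflection (L : D ⥤ C) (R : C ⥤ D) (adj : L ⊣ R)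
    (fs : FactorisationSystem D)
    (hRL : ∀ {X Y : D} (f : X ⟶ Y), fs.F f → fs.F (R.map (L.map f)))
    (hcounit : ∀ X : C, fs.F (R.map (adj.counit.app X))) :
    -- (a) factorisation and orthogonality for maps with domain in `D̃`
    ((∀ {X Y : C} (h : X ⟶ Y), inTildeD L X →
        ∃ (Z : C) (e : X ⟶ Z) (f : Z ⟶ Y),
          isTildeE L fs e ∧ fs.F (R.map f) ∧ e ≫ f = h) ∧
      (∀ {A B X Y : C} (e : A ⟶ B) (f : X ⟶ Y),
        isTildeE L fs e → fs.F (R.map f) →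
        ∀ (u : A ⟶ X) (v : B ⟶ Y), u ≫ f = e ≫ v →
          ∃! d : B ⟶ X, e ≫ d = u ∧ d ≫ f = v)) ∧
    -- (b) the inclusion `Ar^Ẽ(D̃) ↪ D̃↓C` admits a right adjoint sending a morphism to
    -- its `Ẽ`-factor, and (c) this right adjoint preserves cartesian morphisms
    (∃ (w : DdownC L ⥤ ArEt L fs) (adj' : inclArE L fs ⊣ w),
      (∀ a : DdownC L,
        IsIso (CommaMorphism.left (adj'.counit.app a).hom) ∧
        fs.F (R.map (CommaMorphism.right (adj'.counit.app a).hom))) ∧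
      (∀ (a b : DdownC L) (φ : a ⟶ b), IsIso (CommaMorphism.right φ.hom) →
        IsCartesianArrow (domProjArE L fs) (w.map φ))) := by
  refine ⟨⟨fun h hX => factor L R adj fs hRL hcounit h hX,
    fun e f he hf u v hsq => orthE L R adj fs he hf u v hsq⟩, ?_⟩
  refine ⟨wfun L R adj fs hRL hcounit, adjIW L R adj fs hRL hcounit, fun a => ⟨?_, ?_⟩, ?_⟩
  · rw [counit_left L R adj fs hRL hcounit a]
    exact ⟨𝟙 _, by exact Category.comp_id _,
      by exact Category.comp_id _⟩
  · rw [counit_right L R adj fs hRL hcounit a, Category.id_comp]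
    exact (fd L R adj fs hRL hcounit a).hf
  · intro a b φ hiso
    intro c'' χ g hg
    let gc : c''.obj.left ⟶ a.obj.left := g.hom
    have hg' : gc ≫ φ.hom.left = CommaMorphism.left χ.hom := congrArg (fun k => k.hom) hg
    have hχw : c''.obj.hom ≫ CommaMorphism.right χ.hom =
        CommaMorphism.left χ.hom ≫ (fd L R adj fs hRL hcounit b).e := by
      have h0 := Arrow.w χ.hom
      exact h0.symm
    have hφw : φ.hom.left ≫ b.obj.hom = a.obj.hom ≫ φ.hom.right := by
      have h0 := Arrow.w φ.hom
      exact h0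
    -- the lifting square against (fd a).f
    have hsq : (gc ≫ (fd L R adj fs hRL hcounit a).e) ≫ (fd L R adj fs hRL hcounit a).f =
        c''.obj.hom ≫ (CommaMorphism.right χ.hom ≫ (fd L R adj fs hRL hcounit b).f ≫
          inv (CommaMorphism.right φ.hom)) := by
      erw [Category.assoc, (fd L R adj fs hRL hcounit a).hef, ← Category.assoc, hχw,
        Category.assoc,
        ← Category.assoc (fd L R adj fs hRL hcounit b).e (fd L R adj fs hRL hcounit b).f
          (inv (CommaMorphism.right φ.hom)),
        (fd L R adj fs hRL hcounit b).hef, ← hg', Category.assoc,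
        ← Category.assoc (CommaMorphism.left φ.hom) b.obj.hom (inv (CommaMorphism.right φ.hom)),
        hφw, Category.assoc, IsIso.hom_inv_id, Category.comp_id]
    obtain ⟨t, ⟨ht1, ht2⟩, tuniq⟩ := orthE L R adj fs c''.property.2.2
      (fd L R adj fs hRL hcounit a).hf
      (gc ≫ (fd L R adj fs hRL hcounit a).e)
      (CommaMorphism.right χ.hom ≫ (fd L R adj fs hRL hcounit b).f ≫
        inv (CommaMorphism.right φ.hom)) hsq
    -- the unique-lift square against (fd b).f, used to compare with χ.right
    have hsqB : (CommaMorphism.left χ.hom ≫ (fd L R adj fs hRL hcounit b).e) ≫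
        (fd L R adj fs hRL hcounit b).f =
        c''.obj.hom ≫ (CommaMorphism.right χ.hom ≫ (fd L R adj fs hRL hcounit b).f) := by
      erw [← Category.assoc, hχw, Category.assoc]
    have exuB := orthE L R adj fs c''.property.2.2 (fd L R adj fs hRL hcounit b).hf
      (CommaMorphism.left χ.hom ≫ (fd L R adj fs hRL hcounit b).e)
      (CommaMorphism.right χ.hom ≫ (fd L R adj fs hRL hcounit b).f) hsqB
    have htm : t ≫ wmap L R adj fs hRL hcounit φ = CommaMorphism.right χ.hom := by
      refine exuB.unique ⟨?_, ?_⟩ ⟨hχw, rfl⟩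
      · erw [← Category.assoc, ht1, Category.assoc, wmap_comm₁ L R adj fs hRL hcounit φ,
          ← Category.assoc, hg']
        rfl
      · erw [Category.assoc, wmap_comm₂ L R adj fs hRL hcounit φ, ← Category.assoc, ht2]
        exact (Category.assoc _ _ _).trans
          (congrArg (fun k => χ.hom.right ≫ k) (comp_inv_comp_cancel _ _ hiso))
    refine ⟨ObjectProperty.homMk { left := gc, right := t, w := by exact ht1.symm }, ⟨?_, rfl⟩, ?_⟩
    · refine ObjectProperty.hom_ext _ (CommaMorphism.ext ?_ ?_)
      · exact hg'
      · exact htm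
    · rintro θ' ⟨hθc, hθl⟩
      have hl : CommaMorphism.left θ'.hom = gc := congrArg (fun k => k.hom) hθl
      have hr : CommaMorphism.right θ'.hom ≫ wmap L R adj fs hRL hcounit φ =
          CommaMorphism.right χ.hom := by
        have h0 := congrArg (fun k => k.hom.right) hθc
        exact h0
      have hw' : c''.obj.hom ≫ CommaMorphism.right θ'.hom =
          gc ≫ (fd L R adj fs hRL hcounit a).e := by
        have h0 := Arrow.w θ'.hom
        erw [← h0]
        exact congrArg (fun k => k ≫ (fd L R adj fs hRL hcounit a).e) hl
      have ht : CommaMorphism.right θ'.hom = t := by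
        apply tuniq
        refine ⟨hw', ?_⟩
        erw [← cancel_mono (CommaMorphism.right φ.hom), Category.assoc,
          ← wmap_comm₂ L R adj fs hRL hcounit φ, ← Category.assoc, hr]
        exact ((Category.assoc _ _ _).trans
          (congrArg (fun k => χ.hom.right ≫ k) (comp_inv_comp_cancel _ _ hiso))).symm
      refine ObjectProperty.hom_ext _ (CommaMorphism.ext ?_ ?_)
      · exact hl
      · exact ht

end DS3
end

section
/- For X a decomposition space, the counit ε_X : i*u*X → X of the adjunction i* ⊣ u* — the simplicial map whose component in degree n is X(η_n) : X_{n+2} → X_n, where η_n : [n] → [n+2] is the free map sending j to j+1 (the unit of the adjunction i ⊣ u) — is cULF. -/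
open CategoryTheory Opposite

namespace DS3

/-! ## The simplex category Δ: generic and free maps, decomposition spaces -/

/-- A morphism of the simplex category is *generic* (endpoint-preserving) if it preserves
the bottom and the top element. -/
def IsGeneric {m n : SimplexCategory} (a : m ⟶ n) : Prop :=
  a.toOrderHom 0 = 0 ∧ a.toOrderHom (Fin.last m.len) = Fin.last n.len

/-- A morphism of the simplex category is *free* (distance-preserving) if
`a (i+1) = a i + 1`. -/
def IsFree {m n : SimplexCategory} (a : m ⟶ n) : Prop :=
  ∀ i : Fin m.len, (a.toOrderHom i.succ : ℕ) = (a.toOrderHom i.castSucc : ℕ) + 1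

/-- A simplicial set is a *decomposition space* if it sends every pushout in `Δ` of a
generic map along a free map to a pullback of sets. -/
def IsDecomposition (X : SimplexCategoryᵒᵖ ⥤ Type) : Prop :=
  ∀ {a b c d : SimplexCategory} (g : a ⟶ b) (f : a ⟶ c) (f' : b ⟶ d) (g' : c ⟶ d),
    IsGeneric g → IsFree f → IsPushout g f f' g' →
    IsPullback (X.map f'.op) (X.map g'.op) (X.map g.op) (X.map f.op)

/-- A simplicial map is *cULF* if its naturality squares at all generic maps are
pullbacks. -/
def IsCULF {Y X : SimplexCategoryᵒᵖ ⥤ Type} (α : Y ⟶ X) : Prop :=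
  ∀ {m n : SimplexCategory} (g : m ⟶ n), IsGeneric g →
    IsPullback (α.app (op n)) (Y.map g.op) (X.map g.op) (α.app (op m))

/-! ## The category Ξ of finite strict intervals -/

/-- Objects of the category `Ξ` of finite strict intervals: `⟨t⟩` stands for the finite
linear order `Fin (t+2)` with (distinct) bottom element `0` and top element `t+1`.
In the indexing of the paper, `⟨t⟩` is the object `[t-1]`; thus `⟨0⟩ = [-1]`. -/
@[ext] structure IntervalCat : Type where
  /-- the number of non-endpoint elements -/
  len : ℕ

namespace IntervalCat

/-- Morphisms of `Ξ`: order-preserving maps preserving the bottom and the top element. -/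
@[ext] structure Hom (a b : IntervalCat) : Type where
  toOrderHom : Fin (a.len + 2) →o Fin (b.len + 2)
  map_bot : toOrderHom 0 = 0
  map_top : toOrderHom (Fin.last (a.len + 1)) = Fin.last (b.len + 1)

instance : Category IntervalCat where
  Hom := Hom
  id a := ⟨OrderHom.id, rfl, rfl⟩
  comp f g := ⟨g.toOrderHom.comp f.toOrderHom,
    by simp [f.map_bot, g.map_bot], by simp [f.map_top, g.map_top]⟩
  id_comp f := Hom.ext rfl
  comp_id f := Hom.ext rfl
  assoc f g h := Hom.ext rfl

end IntervalCat

/-- The coface map `⟨t⟩ ⟶ ⟨t+1⟩` of `Ξ` skipping the non-endpoint element `i+1`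
(for `i ≤ t`; out of this range the index is clamped).  Under a presheaf `A` on `Ξ` it
induces the face map `d_i : A_n → A_{n-1}` (paper indexing `n = t-1`); for `t = i = 0` it is
the extra outer coface `[-1] → [0]`, inducing `A_0 → A_{-1}`. -/
def xiFace (t i : ℕ) : IntervalCat.mk t ⟶ IntervalCat.mk (t + 1) where
  toOrderHom :=
    { toFun := fun x =>
        ⟨if (x : ℕ) < min (i + 1) (t + 1) then (x : ℕ) else (x : ℕ) + 1, by
          have := x.isLt
          dsimp only at this ⊢
          split <;> omega⟩
      monotone' := by
        intro x y hxy
        have hxy' : (x : ℕ) ≤ (y : ℕ) := hxy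
        simp only [Fin.mk_le_mk]
        split <;> split <;> omega }
  map_bot := by
    apply Fin.ext
    simp only [OrderHom.coe_mk, Fin.val_zero]
    simp
  map_top := by
    apply Fin.ext
    simp only [OrderHom.coe_mk, Fin.val_last]
    split <;> omega

/-- The codegeneracy map `⟨t+1⟩ ⟶ ⟨t⟩` of `Ξ` collapsing the pair `(j, j+1)` onto `j`
(for `j ≤ t+1`; out of this range the index is clamped).  For `j = 0` this is the extra
bottom codegeneracy (inducing `s_{⊥-1} : A_n → A_{n+1}`, paper indexing `n = t-1`), for
`j = t+1` the extra top codegeneracy (inducing `s_{⊤+1}`), and for `1 ≤ j ≤ t` the ordinary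
codegeneracy `σ_{j-1}` (inducing `s_{j-1}`). -/
def xiSigma (t j : ℕ) : IntervalCat.mk (t + 1) ⟶ IntervalCat.mk t where
  toOrderHom :=
    { toFun := fun x =>
        ⟨if (x : ℕ) ≤ min j (t + 1) then (x : ℕ) else (x : ℕ) - 1, by
          have := x.isLt
          dsimp only at this ⊢
          split <;> omega⟩
      monotone' := by
        intro x y hxy
        have hxy' : (x : ℕ) ≤ (y : ℕ) := hxy
        simp only [Fin.mk_le_mk]
        split <;> split <;> omega }
  map_bot := by
    apply Fin.ext
    simp only [OrderHom.coe_mk, Fin.val_zero]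
    simp
  map_top := by
    apply Fin.ext
    simp only [OrderHom.coe_mk, Fin.val_last]
    split <;> omega

/-! ## The functors `u : Ξ ⥤ Δ` and `i : Δ ⥤ Ξ` -/

/-- The forgetful functor `u : Ξ ⥤ Δ`, forgetting that the endpoints are distinguished:
`u ⟨t⟩ = [t+1]`. -/
def uF : IntervalCat ⥤ SimplexCategory where
  obj a := SimplexCategory.mk (a.len + 1)
  map f := SimplexCategory.mkHom f.toOrderHom
  map_id _ := rfl
  map_comp _ _ := rfl

/-- The underlying map of `i f`: extend `f` by a new bottom and a new top element. -/
def iObjMap {m n : ℕ} (f : Fin (m + 1) →o Fin (n + 1)) : Fin (m + 3) →o Fin (n + 3) where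
  toFun x :=
    if (x : ℕ) = 0 then 0
    else if h : m + 2 ≤ (x : ℕ) then Fin.last (n + 2)
    else ⟨(f ⟨(x : ℕ) - 1, by omega⟩ : ℕ) + 1, by
      have := (f ⟨(x : ℕ) - 1, by omega⟩).isLt; omega⟩
  monotone' := by
    intro x y hxy
    have hxy' : (x : ℕ) ≤ (y : ℕ) := hxy
    dsimp only
    by_cases h1 : (x : ℕ) = 0
    · simp only [if_pos h1]
      exact Fin.zero_le _
    · rw [if_neg h1]
      have hy1 : ¬ (y : ℕ) = 0 := by omega
      rw [if_neg hy1]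
      by_cases h2 : m + 2 ≤ (x : ℕ)
      · rw [dif_pos h2, dif_pos (by omega : m + 2 ≤ (y : ℕ))]
      · rw [dif_neg h2]
        by_cases h3 : m + 2 ≤ (y : ℕ)
        · rw [dif_pos h3]
          exact Fin.le_last _
        · rw [dif_neg h3]
          simp only [Fin.mk_le_mk]
          have : (⟨(x : ℕ) - 1, by omega⟩ : Fin (m + 1)) ≤ ⟨(y : ℕ) - 1, by omega⟩ := by
            simp only [Fin.mk_le_mk]; omega
          exact Nat.add_le_add_right (f.monotone this) 1

theorem iObjMap_bot {m n : ℕ} (f : Fin (m + 1) →o Fin (n + 1)) : iObjMap f 0 = 0 := by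
  simp [iObjMap]

theorem iObjMap_top {m n : ℕ} (f : Fin (m + 1) →o Fin (n + 1)) :
    iObjMap f (Fin.last (m + 2)) = Fin.last (n + 2) := by
  simp [iObjMap]

theorem iObjMap_id (m : ℕ) :
    iObjMap (OrderHom.id : Fin (m + 1) →o Fin (m + 1)) = OrderHom.id := by
  apply OrderHom.ext
  funext j
  apply Fin.ext
  have hj := j.isLt
  simp only [iObjMap, OrderHom.coe_mk, OrderHom.id_coe, id_eq]
  split_ifs with h1 h2 <;> simp <;> omega

theorem iObjMap_comp {m p n : ℕ} (f : Fin (m + 1) →o Fin (p + 1))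
    (g : Fin (p + 1) →o Fin (n + 1)) :
    iObjMap (g.comp f) = (iObjMap g).comp (iObjMap f) := by
  apply OrderHom.ext
  funext j
  apply Fin.ext
  have hj := j.isLt
  change ((iObjMap (g.comp f)).toFun j : ℕ) = ((iObjMap g).toFun ((iObjMap f).toFun j) : ℕ)
  simp only [iObjMap, OrderHom.comp_coe, Function.comp_apply]
  by_cases h1 : (j : ℕ) = 0
  · simp [h1]
  · by_cases h2 : m + 2 ≤ (j : ℕ)
    · simp only [if_neg h1, dif_pos h2]
      rw [if_neg (by simp), dif_pos (by simp)]
    · simp only [if_neg h1, dif_neg h2]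
      have hb := (f ⟨(j : ℕ) - 1, by omega⟩).isLt
      rw [if_neg (by simp), dif_neg (by simp; omega)]
      show _ = ((g ⟨(f ⟨(j : ℕ) - 1, by omega⟩ : ℕ) + 1 - 1, by omega⟩ : Fin (n + 1)) : ℕ) + 1
      congr 2

/-- The functor `i : Δ ⥤ Ξ` adjoining a new bottom and a new top element:
`i [n] = ⟨n+1⟩`. -/
def iF : SimplexCategory ⥤ IntervalCat where
  obj x := ⟨x.len + 1⟩
  map f := ⟨iObjMap f.toOrderHom, iObjMap_bot _, iObjMap_top _⟩
  map_id x := IntervalCat.Hom.ext (iObjMap_id x.len)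
  map_comp f g := IntervalCat.Hom.ext (iObjMap_comp f.toOrderHom g.toOrderHom)

/-! ## Presheaves on Ξ -/

/-- Restriction of a simplicial set along `u` (the functor `u*`). -/
def uStar (X : SimplexCategoryᵒᵖ ⥤ Type) : IntervalCatᵒᵖ ⥤ Type := uF.op ⋙ X

/-- Restriction of a presheaf on `Ξ` along `i` (the functor `i*`, taking underlying
simplicial sets). -/
def iStar (A : IntervalCatᵒᵖ ⥤ Type) : SimplexCategoryᵒᵖ ⥤ Type := iF.op ⋙ A

/-- A map of presheaves on `Ξ` is *cartesian* if all its naturality squares are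
pullbacks. -/
def IsCartesianXi {A B : IntervalCatᵒᵖ ⥤ Type} (α : A ⟶ B) : Prop :=
  ∀ ⦃c c' : IntervalCatᵒᵖ⦄ (φ : c ⟶ c'),
    IsPullback (α.app c) (A.map φ) (B.map φ) (α.app c')

/-- A presheaf `A` on `Ξ` is *flanked* if the extra outer degeneracy maps form cartesian
squares with the opposite outer face maps: for all `n ≥ 0` the squares

`A_{n-1} ←d⊤− A_n`         `A_{n-1} ←d⊥− A_n`
`  s⊥↓        ↓s⊥`   and   `  s⊤↓        ↓s⊤`
`A_n  ←d⊤−  A_{n+1}`       `A_n  ←d⊥−  A_{n+1}`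

are pullbacks (where `A_n := A(⟨n+1⟩)` in paper degree indexing, `d⊤` is the top face map,
`d⊥` the bottom face map, and for `n = 0` both are the extra outer face map
`A_0 → A_{-1}`). -/
def Flanked (A : IntervalCatᵒᵖ ⥤ Type) : Prop :=
  ∀ n : ℕ,
    IsPullback (A.map (xiFace n n).op) (A.map (xiSigma (n + 1) 0).op)
      (A.map (xiSigma n 0).op) (A.map (xiFace (n + 1) (n + 1)).op) ∧
    IsPullback (A.map (xiFace n 0).op) (A.map (xiSigma (n + 1) (n + 2)).op)
      (A.map (xiSigma n (n + 1)).op) (A.map (xiFace (n + 1) 0).op)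


/-- The free map `η_n : [n] ⟶ [n+2]`, `j ↦ j+1` (the unit of `i ⊣ u`). -/
def etaDelta (n : ℕ) : SimplexCategory.mk n ⟶ SimplexCategory.mk (n + 2) :=
  SimplexCategory.mkHom
    { toFun := fun j => ⟨(j : ℕ) + 1, by have := j.isLt; omega⟩
      monotone' := by
        intro a b hab
        have : (a : ℕ) ≤ (b : ℕ) := hab
        simp only [Fin.mk_le_mk]
        omega }

theorem etaDelta_natural {x y : SimplexCategory} (f : x ⟶ y) :
    f ≫ etaDelta y.len = etaDelta x.len ≫ uF.map (iF.map f) := by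
  apply SimplexCategory.Hom.ext
  apply OrderHom.ext
  funext j
  apply Fin.ext
  have hj := j.isLt
  show ((f.toOrderHom j : ℕ) + 1)
      = (iObjMap f.toOrderHom ⟨(j : ℕ) + 1, by omega⟩ : ℕ)
  change _ = ((iObjMap f.toOrderHom).toFun _ : ℕ)
  simp only [iObjMap]
  rw [if_neg (by simp), dif_neg (by simp; omega)]
  show _ = (f.toOrderHom ⟨(j : ℕ) + 1 - 1, by omega⟩ : ℕ) + 1
  congr 2

/-- The counit `ε_X : i*u*X ⟶ X` of the adjunction `i* ⊣ u*`: its component in degree `n`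
is `X(η_n) : X_{n+2} → X_n`, where `η_n : [n] → [n+2]` is the free map `j ↦ j+1`. -/
def counitNT (X : SimplexCategoryᵒᵖ ⥤ Type) : iStar (uStar X) ⟶ X where
  app x := X.map (etaDelta x.unop.len).op
  naturality {x y} φ := by
    show X.map _ ≫ X.map _ = X.map _ ≫ X.map φ
    erw [← X.map_comp, ← X.map_comp]
    congr 1
    apply Quiver.Hom.unop_inj
    exact (etaDelta_natural φ.unop).symm

open Limits in
theorem etaDelta_free (m : ℕ) : IsFree (etaDelta m) := by
  intro i
  rfl

open Limits in
theorem eta_pushout {m n : SimplexCategory} (g : m ⟶ n) (hg : IsGeneric g) :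
    IsPushout g (etaDelta m.len) (etaDelta n.len) (uF.map (iF.map g)) := by
  have weq : g ≫ etaDelta n.len = etaDelta m.len ≫ uF.map (iF.map g) := etaDelta_natural g
  have cond_app : ∀ (s : PushoutCocone g (etaDelta m.len)) (i : Fin (m.len + 1)),
      s.inl.toOrderHom (g.toOrderHom i)
        = s.inr.toOrderHom ⟨(i : ℕ) + 1, by have := i.isLt; simp only [SimplexCategory.len_mk]; omega⟩ := by
    intro s i
    exact congrArg (fun f => SimplexCategory.Hom.toOrderHom f i) s.condition
  apply IsPushout.of_isColimit' ⟨weq⟩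
  refine PushoutCocone.IsColimit.mk weq (fun s => SimplexCategory.mkHom
    { toFun := fun x =>
        if (x : ℕ) = 0 then s.inr.toOrderHom 0
        else if n.len + 2 ≤ (x : ℕ) then s.inr.toOrderHom (Fin.last (m.len + 2))
        else s.inl.toOrderHom ⟨min ((x : ℕ) - 1) n.len, by omega⟩
      monotone' := ?_ }) ?_ ?_ ?_
  · -- monotonicity
    have hA : s.inr.toOrderHom 0 ≤ s.inl.toOrderHom 0 := by
      have h1 := cond_app s 0
      rw [hg.1] at h1
      rw [h1]
      exact s.inr.toOrderHom.monotone (Fin.zero_le _)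
    have hB : s.inl.toOrderHom (Fin.last n.len) ≤ s.inr.toOrderHom (Fin.last (m.len + 2)) := by
      have h1 := cond_app s (Fin.last m.len)
      rw [hg.2] at h1
      rw [h1]
      exact s.inr.toOrderHom.monotone (by
        simp only [Fin.le_def, Fin.val_last, Fin.mk_le_mk, SimplexCategory.len_mk]
        omega)
    intro x y hxy
    have hxy' : (x : ℕ) ≤ (y : ℕ) := hxy
    have hx : (x : ℕ) < n.len + 3 := x.isLt
    have hy : (y : ℕ) < n.len + 3 := y.isLt
    dsimp only
    by_cases h1 : (x : ℕ) = 0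
    · rw [if_pos h1]
      by_cases h2 : (y : ℕ) = 0
      · rw [if_pos h2]
      · rw [if_neg h2]
        by_cases h3 : n.len + 2 ≤ (y : ℕ)
        · rw [if_pos h3]
          exact s.inr.toOrderHom.monotone (Fin.zero_le _)
        · rw [if_neg h3]
          exact le_trans hA (s.inl.toOrderHom.monotone (Fin.zero_le _))
    · rw [if_neg h1, if_neg (by omega : ¬ (y : ℕ) = 0)]
      by_cases h2 : n.len + 2 ≤ (x : ℕ)
      · rw [if_pos h2, if_pos (by omega)]
      · rw [if_neg h2]
        by_cases h3 : n.len + 2 ≤ (y : ℕ)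
        · rw [if_pos h3]
          refine le_trans (s.inl.toOrderHom.monotone ?_) hB
          simp only [Fin.le_def, Fin.val_last, Fin.mk_le_mk]
          omega
        · rw [if_neg h3]
          exact s.inl.toOrderHom.monotone (by
            simp only [Fin.le_def, Fin.mk_le_mk]
            omega)
  · -- fac left : etaDelta n.len ≫ desc = s.inl
    intro s
    apply SimplexCategory.Hom.ext
    apply OrderHom.ext
    funext j
    have hj : (j : ℕ) < n.len + 1 := j.isLt
    show (if ((j : ℕ) + 1) = 0 then s.inr.toOrderHom 0
      else if n.len + 2 ≤ (j : ℕ) + 1 then s.inr.toOrderHom (Fin.last (m.len + 2))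
      else s.inl.toOrderHom ⟨min ((j : ℕ) + 1 - 1) n.len, by omega⟩) = s.inl.toOrderHom j
    rw [if_neg (by omega), if_neg (by omega)]
    congr 1
    apply Fin.ext
    simp only
    omega
  · -- fac right : uF.map (iF.map g) ≫ desc = s.inr
    intro s
    apply SimplexCategory.Hom.ext
    apply OrderHom.ext
    funext i
    have hi : (i : ℕ) < m.len + 3 := i.isLt
    show (if ((iObjMap g.toOrderHom i : Fin (n.len + 3)) : ℕ) = 0 then _
      else if n.len + 2 ≤ ((iObjMap g.toOrderHom i : Fin (n.len + 3)) : ℕ) then _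
      else s.inl.toOrderHom ⟨min (((iObjMap g.toOrderHom i : Fin (n.len + 3)) : ℕ) - 1) n.len, _⟩)
      = s.inr.toOrderHom i
    by_cases h1 : (i : ℕ) = 0
    · have hz : ((iObjMap g.toOrderHom i : Fin (n.len + 3)) : ℕ) = 0 := by
        have hi0 : i = (0 : Fin (m.len + 3)) := Fin.ext h1
        rw [hi0, iObjMap_bot]
        rfl
      rw [if_pos hz]
      congr 1
      exact (Fin.ext h1.symm : (0 : Fin (m.len + 3)) = i)
    · by_cases h2 : m.len + 2 ≤ (i : ℕ)
      · have hz : ((iObjMap g.toOrderHom i : Fin (n.len + 3)) : ℕ) = n.len + 2 := by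
          have hi0 : i = (Fin.last (m.len + 2) : Fin (m.len + 3)) := Fin.ext (by
            simp only [Fin.val_last]; omega)
          rw [hi0, iObjMap_top]
          rfl
        rw [if_neg (by omega), if_pos (by omega)]
        congr 1
        apply Fin.ext
        simp only [Fin.val_last, SimplexCategory.len_mk]
        omega
      · have hval : ((iObjMap g.toOrderHom i : Fin (n.len + 3)) : ℕ)
            = (g.toOrderHom ⟨(i : ℕ) - 1, by omega⟩ : ℕ) + 1 := by
          show ((if (i : ℕ) = 0 then _ else if h : m.len + 2 ≤ (i : ℕ) then _ else _ :
            Fin (n.len + 3)) : ℕ) = _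
          rw [if_neg h1, dif_neg h2]
        have hb := (g.toOrderHom ⟨(i : ℕ) - 1, by omega⟩).isLt
        rw [if_neg (by omega), if_neg (by omega)]
        have hc := cond_app s ⟨(i : ℕ) - 1, by omega⟩
        refine Eq.trans ?_ (Eq.trans hc (congrArg s.inr.toOrderHom (Fin.ext (by
          simp only; omega))))
        congr 1
        apply Fin.ext
        simp only [hval]
        omega
  · -- uniqueness
    intro s t hl hr
    have hl' : ∀ j : Fin ((SimplexCategory.mk n.len).len + 1),
        t.toOrderHom (⟨(j : ℕ) + 1, by have := j.isLt; simp only [SimplexCategory.len_mk] at this; omega⟩ : Fin (n.len + 3))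
          = s.inl.toOrderHom j :=
      fun j => congrArg (fun f => SimplexCategory.Hom.toOrderHom f j) hl
    have hr' : ∀ j : Fin ((SimplexCategory.mk (m.len + 2)).len + 1),
        t.toOrderHom ((iObjMap g.toOrderHom j : Fin (n.len + 3))) = s.inr.toOrderHom j :=
      fun j => congrArg (fun f => SimplexCategory.Hom.toOrderHom f j) hr
    apply SimplexCategory.Hom.ext
    apply OrderHom.ext
    funext x
    have hx : (x : ℕ) < n.len + 3 := x.isLt
    show t.toOrderHom x = if (x : ℕ) = 0 then _ else if n.len + 2 ≤ (x : ℕ) then _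
      else s.inl.toOrderHom ⟨min ((x : ℕ) - 1) n.len, _⟩
    by_cases h1 : (x : ℕ) = 0
    · rw [if_pos h1]
      refine Eq.trans ?_ (hr' 0)
      congr 1
      rw [iObjMap_bot]
      exact Fin.ext h1
    · rw [if_neg h1]
      by_cases h2 : n.len + 2 ≤ (x : ℕ)
      · rw [if_pos h2]
        refine Eq.trans ?_ (hr' (Fin.last (m.len + 2)))
        congr 1
        rw [iObjMap_top]
        apply Fin.ext
        simp only [Fin.val_last]
        omega
      · rw [if_neg h2]
        refine Eq.trans ?_ (hl' ⟨min ((x : ℕ) - 1) n.len, by simp only [SimplexCategory.len_mk]; omega⟩)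
        congr 1
        apply Fin.ext
        simp only
        omega

/-- for `X` a decomposition space, the counit `ε_X : i*u*X ⟶ X` is cULF. -/
theorem counit_cULF (X : SimplexCategoryᵒᵖ ⥤ Type) (hX : IsDecomposition X) :
    IsCULF (counitNT X) := by
  intro m n g hg
  exact hX g (etaDelta m.len) (etaDelta n.len) (uF.map (iF.map g)) hg
    (etaDelta_free m.len) (eta_pushout g hg)


end DS3
end
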